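/- Let f : I → ℝ be strictly increasing and n ∈ ℕ. Then A_{f₋}^{[n]} is lower semicontinuous on Iⁿ and A_{f₊}^{[n]} is upper semicontinuous on Iⁿ. -/

import Mathlib

open Set Filter Topology

/-- `finv` is the generalized inverse of the strictly increasing function `f : I → ℝ`:
an increasing continuous left inverse of `f` mapping `conv (f '' I)` into `I`. -/
def IsGenInv (I : Set ℝ) (f finv : ℝ → ℝ) : Prop :=
  MonotoneOn finv (convexHull ℝ (f '' I)) ∧
  ContinuousOn finv (convexHull ℝ (f '' I)) ∧
  Set.MapsTo finv (convexHull ℝ (f '' I)) I ∧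
  ∀ x ∈ I, finv (f x) = x

/-- The `n`-variable generalized quasiarithmetic mean `A_f^{[n]}` generated by `f`,
where `finv` is the generalized inverse of `f`. -/
noncomputable def qam (finv f : ℝ → ℝ) (n : ℕ) (x : Fin n → ℝ) : ℝ :=
  finv ((∑ i, f (x i)) / n)

private lemma left_mem_conv {I : Set ℝ} (hIo : IsOpen I) (hIc : I.OrdConnected)
    {f fm : ℝ → ℝ} (hf : StrictMonoOn f I)
    (hfm : ∀ x ∈ I, Tendsto f (𝓝[<] x) (𝓝 (fm x)))
    {x : ℝ} (hx : x ∈ I) : fm x ∈ convexHull ℝ (f '' I) := by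
  obtain ⟨y, hyI, hyx⟩ : ∃ y, y ∈ I ∧ y < x := by
    have h1 : ∀ᶠ z in 𝓝[<] x, z ∈ I :=
      eventually_nhdsWithin_of_eventually_nhds (hIo.mem_nhds hx)
    exact (h1.and self_mem_nhdsWithin).exists
  have hIoo : ∀ z ∈ Ioo y x, z ∈ I := fun z hz => hIc.out hyI hx ⟨hz.1.le, hz.2.le⟩
  have hmemIoo : Ioo y x ∈ 𝓝[<] x := Ioo_mem_nhdsLT_of_mem ⟨hyx, le_refl x⟩
  have h1 : f y ≤ fm x := by
    refine ge_of_tendsto (hfm x hx) ?_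
    filter_upwards [hmemIoo] with z hz
    exact (hf hyI (hIoo z hz) hz.1).le
  have h2 : fm x ≤ f x := by
    refine le_of_tendsto (hfm x hx) ?_
    filter_upwards [hmemIoo] with z hz
    exact (hf (hIoo z hz) hx hz.2).le
  exact ((convex_convexHull ℝ (f '' I)).ordConnected.out
    (subset_convexHull ℝ _ ⟨y, hyI, rfl⟩) (subset_convexHull ℝ _ ⟨x, hx, rfl⟩)) ⟨h1, h2⟩

private lemma right_mem_conv {I : Set ℝ} (hIo : IsOpen I) (hIc : I.OrdConnected)
    {f fp : ℝ → ℝ} (hf : StrictMonoOn f I)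
    (hfp : ∀ x ∈ I, Tendsto f (𝓝[>] x) (𝓝 (fp x)))
    {x : ℝ} (hx : x ∈ I) : fp x ∈ convexHull ℝ (f '' I) := by
  obtain ⟨y, hyI, hxy⟩ : ∃ y, y ∈ I ∧ x < y := by
    have h1 : ∀ᶠ z in 𝓝[>] x, z ∈ I :=
      eventually_nhdsWithin_of_eventually_nhds (hIo.mem_nhds hx)
    exact (h1.and self_mem_nhdsWithin).exists
  have hIoo : ∀ z ∈ Ioo x y, z ∈ I := fun z hz => hIc.out hx hyI ⟨hz.1.le, hz.2.le⟩
  have hmemIoo : Ioo x y ∈ 𝓝[>] x := Ioo_mem_nhdsGT_of_mem ⟨le_refl x, hxy⟩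
  have h1 : f x ≤ fp x := by
    refine ge_of_tendsto (hfp x hx) ?_
    filter_upwards [hmemIoo] with z hz
    exact (hf hx (hIoo z hz) hz.1).le
  have h2 : fp x ≤ f y := by
    refine le_of_tendsto (hfp x hx) ?_
    filter_upwards [hmemIoo] with z hz
    exact (hf (hIoo z hz) hyI hz.2).le
  exact ((convex_convexHull ℝ (f '' I)).ordConnected.out
    (subset_convexHull ℝ _ ⟨x, hx, rfl⟩) (subset_convexHull ℝ _ ⟨y, hyI, rfl⟩)) ⟨h1, h2⟩

private lemma left_lsc {I : Set ℝ} (hIo : IsOpen I) (hIc : I.OrdConnected)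
    {f fm : ℝ → ℝ} (hf : StrictMonoOn f I)
    (hfm : ∀ x ∈ I, Tendsto f (𝓝[<] x) (𝓝 (fm x))) :
    LowerSemicontinuousOn fm I := by
  intro x hx y hy
  have hev : ∀ᶠ z in 𝓝[<] x, y < f z ∧ z ∈ I ∧ z ∈ Iio x := by
    refine (((hfm x hx).eventually (eventually_gt_nhds hy)).and ?_)
    exact (eventually_nhdsWithin_of_eventually_nhds (hIo.mem_nhds hx)).and
      self_mem_nhdsWithin
  obtain ⟨z, hyz, hzI, hzx⟩ := hev.exists
  filter_upwards [inter_mem_nhdsWithin I (Ioi_mem_nhds hzx)] with x' hx'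
  obtain ⟨hx'I, hzx'⟩ := hx'
  have hle : f z ≤ fm x' := by
    refine ge_of_tendsto (hfm x' hx'I) ?_
    filter_upwards [Ioo_mem_nhdsLT_of_mem (show x' ∈ Ioc z x' from ⟨hzx', le_refl x'⟩)]
      with w hw
    exact (hf hzI (hIc.out hzI hx'I ⟨hw.1.le, hw.2.le⟩) hw.1).le
  exact lt_of_lt_of_le hyz hle

private lemma right_usc {I : Set ℝ} (hIo : IsOpen I) (hIc : I.OrdConnected)
    {f fp : ℝ → ℝ} (hf : StrictMonoOn f I)
    (hfp : ∀ x ∈ I, Tendsto f (𝓝[>] x) (𝓝 (fp x))) :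
    UpperSemicontinuousOn fp I := by
  intro x hx y hy
  have hev : ∀ᶠ z in 𝓝[>] x, f z < y ∧ z ∈ I ∧ z ∈ Ioi x := by
    refine (((hfp x hx).eventually (eventually_lt_nhds hy)).and ?_)
    exact (eventually_nhdsWithin_of_eventually_nhds (hIo.mem_nhds hx)).and
      self_mem_nhdsWithin
  obtain ⟨z, hyz, hzI, hzx⟩ := hev.exists
  filter_upwards [inter_mem_nhdsWithin I (Iio_mem_nhds hzx)] with x' hx'
  obtain ⟨hx'I, hx'z⟩ := hx'
  have hle : fp x' ≤ f z := by
    refine le_of_tendsto (hfp x' hx'I) ?_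
    filter_upwards [Ioo_mem_nhdsGT_of_mem (show x' ∈ Ico x' z from ⟨le_refl x', hx'z⟩)]
      with w hw
    exact (hf (hIc.out hx'I hzI ⟨hw.1.le, hw.2.le⟩) hzI hw.2).le
  exact lt_of_le_of_lt hle hyz

/-- `A_{f₋}^{[n]}` is lower semicontinuous and `A_{f₊}^{[n]}` is upper
semicontinuous on `Iⁿ`. -/
theorem stmt12 (I : Set ℝ) (hIo : IsOpen I) (hIc : I.OrdConnected) (hne : I.Nonempty)
    (f fm fp finv : ℝ → ℝ) (hf : StrictMonoOn f I)
    (hfm : ∀ x ∈ I, Tendsto f (𝓝[<] x) (𝓝 (fm x)))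
    (hfp : ∀ x ∈ I, Tendsto f (𝓝[>] x) (𝓝 (fp x)))
    (hinv : IsGenInv I f finv)
    (n : ℕ) (hn : 1 ≤ n) :
    LowerSemicontinuousOn (qam finv fm n) (Set.univ.pi fun _ : Fin n => I) ∧
    UpperSemicontinuousOn (qam finv fp n) (Set.univ.pi fun _ : Fin n => I) := by
  set C := convexHull ℝ (f '' I) with hCdef
  set s : Set (Fin n → ℝ) := Set.univ.pi fun _ : Fin n => I with hsdef
  have hCord : C.OrdConnected := (convex_convexHull ℝ (f '' I)).ordConnected
  obtain ⟨hmono, hcont, -, -⟩ := hinv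
  have hnpos : (0 : ℝ) < n := by positivity
  -- membership of averages in C
  have memF : ∀ (g : ℝ → ℝ), (∀ x ∈ I, g x ∈ C) → ∀ x' ∈ s,
      (∑ i, g (x' i)) / n ∈ C := by
    intro g hg x' hx'
    have : (∑ i, g (x' i)) / n = ∑ i : Fin n, (1 / (n : ℝ)) • g (x' i) := by
      rw [Finset.sum_div]
      exact Finset.sum_congr rfl fun i _ => by
        rw [smul_eq_mul, one_div, div_eq_mul_inv, mul_comm]
    rw [this]
    refine (convex_convexHull ℝ (f '' I)).sum_mem (fun i _ => by positivity) ?_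
      (fun i _ => hg (x' i) (hx' i (mem_univ i)))
    rw [Finset.sum_const, Finset.card_univ, Fintype.card_fin, nsmul_eq_mul]
    field_simp
  have hfmC : ∀ x ∈ I, fm x ∈ C := fun x hx => left_mem_conv hIo hIc hf hfm hx
  have hfpC : ∀ x ∈ I, fp x ∈ C := fun x hx => right_mem_conv hIo hIc hf hfp hx
  constructor
  · -- lower semicontinuity
    intro x hx
    set F : (Fin n → ℝ) → ℝ := fun x' => (∑ i, fm (x' i)) / n with hFdef
    have hFlsc : LowerSemicontinuousWithinAt F s x := by
      have hsum : LowerSemicontinuousWithinAt (fun x' : Fin n → ℝ => ∑ i, fm (x' i)) s x := by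
        refine lowerSemicontinuousWithinAt_sum fun i _ => ?_
        intro y hy
        have h1 : ∀ᶠ z in 𝓝[I] (x i), y < fm z :=
          left_lsc hIo hIc hf hfm (x i) (hx i (mem_univ i)) y hy
        have htend : Tendsto (fun x' : Fin n → ℝ => x' i) (𝓝[s] x) (𝓝[I] (x i)) :=
          ((continuous_apply i).continuousWithinAt).tendsto_nhdsWithin
            (fun x' hx' => hx' i (mem_univ i))
        exact htend.eventually h1
      have : LowerSemicontinuousWithinAt
          (fun x' : Fin n → ℝ => (1 / (n : ℝ)) * ∑ i, fm (x' i)) s x := by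
        refine ContinuousAt.comp_lowerSemicontinuousWithinAt
          (continuousAt_const.mul continuousAt_id) hsum ?_
        exact fun a b hab => by
          have : (0:ℝ) ≤ 1 / n := by positivity
          exact mul_le_mul_of_nonneg_left hab this
      convert this using 2 with x'
      rw [div_eq_mul_inv, mul_comm, ← div_eq_mul_inv, one_div]
      rfl
    intro y hy
    have hmC : F x ∈ C := memF fm hfmC x hx
    by_cases hex : ∃ t ∈ C, t < F x
    · obtain ⟨u, huC, hum⟩ := hex
      have hIco : Ico u (F x) ⊆ C := fun t ht =>
        hCord.out huC hmC ⟨ht.1, ht.2.le⟩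
      have hnb : 𝓝[Ico u (F x)] (F x) = 𝓝[<] (F x) :=
        nhdsWithin_Ico_eq_nhdsLT hum
      have htend : Tendsto finv (𝓝[Ico u (F x)] (F x)) (𝓝 (finv (F x))) :=
        (hcont (F x) hmC).mono_left (nhdsWithin_mono _ hIco)
      have hev : ∀ᶠ t in 𝓝[Ico u (F x)] (F x), y < finv t ∧ t ∈ Ico u (F x) :=
        (htend.eventually (eventually_gt_nhds hy)).and self_mem_nhdsWithin
      have : (𝓝[Ico u (F x)] (F x)).NeBot := by rw [hnb]; infer_instance
      obtain ⟨t, hyt, htIco⟩ := hev.exists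
      filter_upwards [hFlsc t htIco.2, self_mem_nhdsWithin] with x' hFx' hx's
      have htC : t ∈ C := hIco htIco
      have : finv t ≤ finv (F x') := hmono htC (memF fm hfmC x' hx's) hFx'.le
      exact lt_of_lt_of_le hyt this
    · push_neg at hex
      filter_upwards [self_mem_nhdsWithin] with x' hx's
      have hF'C : F x' ∈ C := memF fm hfmC x' hx's
      have : finv (F x) ≤ finv (F x') := hmono hmC hF'C (hex _ hF'C)
      exact lt_of_lt_of_le hy this
  · -- upper semicontinuity
    intro x hx
    set F : (Fin n → ℝ) → ℝ := fun x' => (∑ i, fp (x' i)) / n with hFdef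
    have hFusc : UpperSemicontinuousWithinAt F s x := by
      have hsum : UpperSemicontinuousWithinAt (fun x' : Fin n → ℝ => ∑ i, fp (x' i)) s x := by
        refine upperSemicontinuousWithinAt_sum fun i _ => ?_
        intro y hy
        have h1 : ∀ᶠ z in 𝓝[I] (x i), fp z < y :=
          right_usc hIo hIc hf hfp (x i) (hx i (mem_univ i)) y hy
        have htend : Tendsto (fun x' : Fin n → ℝ => x' i) (𝓝[s] x) (𝓝[I] (x i)) :=
          ((continuous_apply i).continuousWithinAt).tendsto_nhdsWithin
            (fun x' hx' => hx' i (mem_univ i))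
        exact htend.eventually h1
      have : UpperSemicontinuousWithinAt
          (fun x' : Fin n → ℝ => (1 / (n : ℝ)) * ∑ i, fp (x' i)) s x := by
        refine ContinuousAt.comp_upperSemicontinuousWithinAt
          (continuousAt_const.mul continuousAt_id) hsum ?_
        exact fun a b hab => by
          have : (0:ℝ) ≤ 1 / n := by positivity
          exact mul_le_mul_of_nonneg_left hab this
      convert this using 2 with x'
      rw [div_eq_mul_inv, mul_comm, ← div_eq_mul_inv, one_div]
      rfl
    intro y hy
    have hmC : F x ∈ C := memF fp hfpC x hx
    by_cases hex : ∃ t ∈ C, F x < t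
    · obtain ⟨u, huC, hum⟩ := hex
      have hIoc : Ioc (F x) u ⊆ C := fun t ht =>
        hCord.out hmC huC ⟨ht.1.le, ht.2⟩
      have hnb : 𝓝[Ioc (F x) u] (F x) = 𝓝[>] (F x) :=
        nhdsWithin_Ioc_eq_nhdsGT hum
      have htend : Tendsto finv (𝓝[Ioc (F x) u] (F x)) (𝓝 (finv (F x))) :=
        (hcont (F x) hmC).mono_left (nhdsWithin_mono _ hIoc)
      have hev : ∀ᶠ t in 𝓝[Ioc (F x) u] (F x), finv t < y ∧ t ∈ Ioc (F x) u :=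
        (htend.eventually (eventually_lt_nhds hy)).and self_mem_nhdsWithin
      have : (𝓝[Ioc (F x) u] (F x)).NeBot := by rw [hnb]; infer_instance
      obtain ⟨t, hyt, htIoc⟩ := hev.exists
      filter_upwards [hFusc t htIoc.1, self_mem_nhdsWithin] with x' hFx' hx's
      have htC : t ∈ C := hIoc htIoc
      have : finv (F x') ≤ finv t := hmono (memF fp hfpC x' hx's) htC hFx'.le
      exact lt_of_le_of_lt this hyt
    · push_neg at hex
      filter_upwards [self_mem_nhdsWithin] with x' hx's
      have hF'C : F x' ∈ C := memF fp hfpC x' hx's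
      have : finv (F x') ≤ finv (F x) := hmono hF'C hmC (hex _ hF'C)
      exact lt_of_le_of_lt this hy
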